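/- Let V be a real vector space of odd dimension n = 2r+1, X ∈ V, θ ∈ V* with θ(X) = 1, and let ω ∈ Λ²V* satisfy ι_X ω = 0 and assume ω restricts to a symplectic form on W = ker θ (so that wedging by ω^{r−k} is an isomorphism Λ^k W* → Λ^{2r−k} W*, identifying Λ^j W* with Λ^j V* ∩ ker ι_X). Define Γ : Λ^k V* → Λ^{n−k}V* for 0 ≤ k ≤ r by Γ(f∧θ + g) = (g∧ω^{r−k})∧θ + f∧ω^{r−k+1} for f ∈ Λ^{k−1}V* ∩ ker ι_X and g ∈ Λ^k V* ∩ ker ι_X, and for r+1 ≤ k ≤ n by Γ(f∧θ + g) = ((L^{k−r})^{−1}g)∧θ + (L^{k−1−r})^{−1}f, where L denotes wedging by ω on ker ι_X. Then Γ² = id on Λ^• V*. -/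

import Mathlib

set_option maxHeartbeats 1000000
set_option synthInstance.maxHeartbeats 1000000

/-- Interior multiplication `ι_X` on forms (elements of the exterior algebra of
`V* = Module.Dual ℝ V`): left contraction by the evaluation functional of
`X ∈ V`. -/
noncomputable def interiorProd {V : Type*} [AddCommGroup V] [Module ℝ V]
    (X : V) :
    ExteriorAlgebra ℝ (Module.Dual ℝ V) →ₗ[ℝ] ExteriorAlgebra ℝ (Module.Dual ℝ V) :=
  CliffordAlgebra.contractLeft (Module.Dual.eval ℝ V X)

section Aux

variable {V : Type*} [AddCommGroup V] [Module ℝ V]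

lemma interiorProd_ι_mul (X : V) (φ : Module.Dual ℝ V)
    (x : ExteriorAlgebra ℝ (Module.Dual ℝ V)) :
    interiorProd X (ExteriorAlgebra.ι ℝ φ * x)
      = φ X • x - ExteriorAlgebra.ι ℝ φ * interiorProd X x := by
  have := CliffordAlgebra.contractLeft_ι_mul (d := Module.Dual.eval ℝ V X) φ x
  simpa [interiorProd] using this

lemma interiorProd_algebraMap (X : V) (c : ℝ) :
    interiorProd X (algebraMap ℝ (ExteriorAlgebra ℝ (Module.Dual ℝ V)) c) = 0 :=
  CliffordAlgebra.contractLeft_algebraMap _ _ c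

lemma interiorProd_interiorProd (X : V) (x : ExteriorAlgebra ℝ (Module.Dual ℝ V)) :
    interiorProd X (interiorProd X x) = 0 :=
  CliffordAlgebra.contractLeft_contractLeft _ x

lemma interiorProd_of_zeroth (X : V) {x : ExteriorAlgebra ℝ (Module.Dual ℝ V)}
    (hx : x ∈ ⋀[ℝ]^0 (Module.Dual ℝ V)) : interiorProd X x = 0 := by
  rw [show ⋀[ℝ]^0 (Module.Dual ℝ V) = 1 from pow_zero _] at hx
  obtain ⟨c, rfl⟩ := Submodule.mem_one.mp hx
  exact interiorProd_algebraMap X c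

lemma interiorProd_mem (X : V) {n : ℕ} {x : ExteriorAlgebra ℝ (Module.Dual ℝ V)}
    (hx : x ∈ ⋀[ℝ]^n (Module.Dual ℝ V)) :
    interiorProd X x ∈ ⋀[ℝ]^(n - 1) (Module.Dual ℝ V) := by
  induction hx using Submodule.pow_induction_on_left' with
  | algebraMap r => rw [interiorProd_algebraMap]; exact zero_mem _
  | add x y i hx hy ihx ihy => rw [map_add]; exact add_mem ihx ihy
  | mem_mul m hm i x hx ih =>
    obtain ⟨φ, rfl⟩ := hm
    rw [interiorProd_ι_mul]
    have h1 : (φ X) • x ∈ ⋀[ℝ]^(i + 1 - 1) (Module.Dual ℝ V) := by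
      simpa using Submodule.smul_mem _ _ hx
    refine sub_mem h1 ?_
    cases i with
    | zero =>
      rw [interiorProd_of_zeroth X hx, mul_zero]
      exact zero_mem _
    | succ j =>
      have h2 : ExteriorAlgebra.ι ℝ φ * interiorProd X x ∈
          LinearMap.range (ExteriorAlgebra.ι ℝ (M := Module.Dual ℝ V)) *
            ⋀[ℝ]^j (Module.Dual ℝ V) :=
        Submodule.mul_mem_mul (LinearMap.mem_range_self _ φ) (by simpa using ih)
      rw [← pow_succ'] at h2
      simpa using h2

lemma ι_mul_comm (φ : Module.Dual ℝ V) {n : ℕ} {x : ExteriorAlgebra ℝ (Module.Dual ℝ V)}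
    (hx : x ∈ ⋀[ℝ]^n (Module.Dual ℝ V)) :
    ExteriorAlgebra.ι ℝ φ * x = ((-1 : ℝ)) ^ n • (x * ExteriorAlgebra.ι ℝ φ) := by
  induction hx using Submodule.pow_induction_on_left' with
  | algebraMap r => rw [pow_zero, one_smul, Algebra.commutes]
  | add x y i hx hy ihx ihy => rw [mul_add, add_mul, smul_add, ihx, ihy]
  | mem_mul m hm i x hx ih =>
    obtain ⟨ψ, rfl⟩ := hm
    have swap : ExteriorAlgebra.ι ℝ φ * ExteriorAlgebra.ι ℝ ψ
        = -(ExteriorAlgebra.ι ℝ ψ * ExteriorAlgebra.ι ℝ φ) :=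
      eq_neg_of_add_eq_zero_left (ExteriorAlgebra.ι_add_mul_swap φ ψ)
    calc ExteriorAlgebra.ι ℝ φ * (ExteriorAlgebra.ι ℝ ψ * x)
        = (ExteriorAlgebra.ι ℝ φ * ExteriorAlgebra.ι ℝ ψ) * x := (mul_assoc _ _ _).symm
      _ = -(ExteriorAlgebra.ι ℝ ψ * (ExteriorAlgebra.ι ℝ φ * x)) := by
          rw [swap, neg_mul, mul_assoc]
      _ = -(ExteriorAlgebra.ι ℝ ψ * (((-1 : ℝ)) ^ i • (x * ExteriorAlgebra.ι ℝ φ))) := by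
          rw [ih]
      _ = ((-1 : ℝ)) ^ (i + 1) • (ExteriorAlgebra.ι ℝ ψ * x * ExteriorAlgebra.ι ℝ φ) := by
          rw [mul_smul_comm, pow_succ, mul_smul, neg_one_smul, mul_assoc, smul_neg]

lemma exteriorPower_eq_bot [FiniteDimensional ℝ V] {k : ℕ}
    (hk : Module.finrank ℝ V < k) : ⋀[ℝ]^k (Module.Dual ℝ V) = ⊥ := by
  rw [← ExteriorAlgebra.ιMulti_span_fixedDegree, Submodule.span_eq_bot]
  rintro _ ⟨v, rfl⟩
  refine AlternatingMap.map_linearDependent _ v ?_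
  intro h
  have := h.fintype_card_le_finrank
  rw [Fintype.card_fin, Subspace.dual_finrank_eq] at this
  omega

lemma decomp (X : V) (θ : Module.Dual ℝ V) (hθX : θ X = 1) {k : ℕ}
    {u : ExteriorAlgebra ℝ (Module.Dual ℝ V)} (hu : u ∈ ⋀[ℝ]^(k + 1) (Module.Dual ℝ V)) :
    ∃ f g : ExteriorAlgebra ℝ (Module.Dual ℝ V),
      f ∈ ⋀[ℝ]^k (Module.Dual ℝ V) ∧ interiorProd X f = 0 ∧
      g ∈ ⋀[ℝ]^(k + 1) (Module.Dual ℝ V) ∧ interiorProd X g = 0 ∧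
      u = f * ExteriorAlgebra.ι ℝ θ + g := by
  set t := ExteriorAlgebra.ι ℝ θ with ht
  set f₁ := interiorProd X u with hf₁
  have hf₁m : f₁ ∈ ⋀[ℝ]^k (Module.Dual ℝ V) := by
    simpa using interiorProd_mem X hu
  have hf₁i : interiorProd X f₁ = 0 := interiorProd_interiorProd X u
  have htf₁ : t * f₁ ∈ ⋀[ℝ]^(k + 1) (Module.Dual ℝ V) := by
    have := Submodule.mul_mem_mul (LinearMap.mem_range_self (ExteriorAlgebra.ι ℝ) θ) hf₁m
    rwa [← pow_succ'] at this
  refine ⟨((-1 : ℝ)) ^ k • f₁, u - t * f₁, Submodule.smul_mem _ _ hf₁m, ?_,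
    sub_mem hu htf₁, ?_, ?_⟩
  · rw [map_smul, hf₁i, smul_zero]
  · rw [map_sub, ht, interiorProd_ι_mul X θ f₁, hθX, one_smul, hf₁i, mul_zero, sub_zero,
      ← hf₁, sub_self]
  · rw [smul_mul_assoc, ← ι_mul_comm θ hf₁m]
    abel

end Aux

/-!
STATEMENT 17 (the chirality operator is an involution).
`V` is a real vector space of odd dimension `n = 2r+1`, `X ∈ V`, `θ ∈ V*`
with `θ(X) = 1`, and `ω ∈ Λ²V*` satisfies `ι_X ω = 0` and the hard Lefschetz
property (hypothesis `hL`): for `k ≤ r`, wedging by `ω^{r-k}` is a bijection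
`Λ^k V* ∩ ker ι_X → Λ^{2r-k} V* ∩ ker ι_X` (this is the assumption that `ω`
restricts to a symplectic form on `ker θ`).  `Γ` is the chirality operator,
characterized on `Λ^k` for `k ≤ r` by
`Γ(f∧θ + g) = (g ∧ ω^{r-k}) ∧ θ + f ∧ ω^{r-k+1}` (`f ∈ Λ^{k-1} ∩ ker ι_X`,
`g ∈ Λ^k ∩ ker ι_X`), and on `Λ^k` for `r+1 ≤ k ≤ n` by
`Γ(f∧θ + g) = (L^{k-r})⁻¹ g ∧ θ + (L^{k-1-r})⁻¹ f`, expressed below without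
inverses via the Lefschetz representations `f = f₀ ∧ ω^{k-1-r}`,
`g = g₀ ∧ ω^{k-r}`.  Then `Γ² = id` on `Λ^• V*`. -/
theorem stmt17 (V : Type*) [AddCommGroup V] [Module ℝ V] [FiniteDimensional ℝ V]
    (r : ℕ) (hdim : Module.finrank ℝ V = 2 * r + 1)
    (X : V) (θ : Module.Dual ℝ V) (hθX : θ X = 1)
    (ω : ExteriorAlgebra ℝ (Module.Dual ℝ V))
    (hω2 : ω ∈ ⋀[ℝ]^2 (Module.Dual ℝ V))
    (hιω : interiorProd X ω = 0)
    (hL : ∀ k : ℕ, k ≤ r →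
      (∀ u ∈ ⋀[ℝ]^k (Module.Dual ℝ V), interiorProd X u = 0 →
        u * ω ^ (r - k) = 0 → u = 0) ∧
      (∀ y ∈ ⋀[ℝ]^(2 * r - k) (Module.Dual ℝ V), interiorProd X y = 0 →
        ∃ u ∈ ⋀[ℝ]^k (Module.Dual ℝ V),
          interiorProd X u = 0 ∧ u * ω ^ (r - k) = y))
    (Γ : ExteriorAlgebra ℝ (Module.Dual ℝ V) →ₗ[ℝ]
      ExteriorAlgebra ℝ (Module.Dual ℝ V))
    (hΓ0 : ∀ g ∈ ⋀[ℝ]^0 (Module.Dual ℝ V),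
      Γ g = (g * ω ^ r) * ExteriorAlgebra.ι ℝ θ)
    (hΓ1 : ∀ k : ℕ, k + 1 ≤ r →
      ∀ f g : ExteriorAlgebra ℝ (Module.Dual ℝ V),
        f ∈ ⋀[ℝ]^k (Module.Dual ℝ V) → interiorProd X f = 0 →
        g ∈ ⋀[ℝ]^(k + 1) (Module.Dual ℝ V) → interiorProd X g = 0 →
        Γ (f * ExteriorAlgebra.ι ℝ θ + g) =
          (g * ω ^ (r - (k + 1))) * ExteriorAlgebra.ι ℝ θ + f * ω ^ (r - k))
    (hΓ2 : ∀ k : ℕ, r + 1 ≤ k → k ≤ 2 * r →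
      ∀ f₀ g₀ : ExteriorAlgebra ℝ (Module.Dual ℝ V),
        f₀ ∈ ⋀[ℝ]^(2 * r - k + 1) (Module.Dual ℝ V) → interiorProd X f₀ = 0 →
        g₀ ∈ ⋀[ℝ]^(2 * r - k) (Module.Dual ℝ V) → interiorProd X g₀ = 0 →
        Γ ((f₀ * ω ^ (k - 1 - r)) * ExteriorAlgebra.ι ℝ θ + g₀ * ω ^ (k - r)) =
          g₀ * ExteriorAlgebra.ι ℝ θ + f₀)
    (hΓ3 : ∀ f₀ ∈ ⋀[ℝ]^0 (Module.Dual ℝ V),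
      Γ ((f₀ * ω ^ r) * ExteriorAlgebra.ι ℝ θ) = f₀) :
    Γ ∘ₗ Γ = LinearMap.id := by
  
  have hbot : ∀ j : ℕ, 2 * r + 1 < j → ⋀[ℝ]^j (Module.Dual ℝ V) = ⊥ := by
    intro j hj
    exact exteriorPower_eq_bot (by omega)
  have main : ∀ (k : ℕ), ∀ u ∈ ⋀[ℝ]^k (Module.Dual ℝ V), Γ (Γ u) = u := by
    intro k u hu
    obtain _ | m := k
    · rw [hΓ0 u hu, hΓ3 u hu]
    · by_cases hk2 : 2 * r + 1 < m + 1
      · have hu0 : u = 0 := by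
          rw [hbot _ hk2] at hu
          simpa using hu
        simp [hu0]
      · obtain ⟨f, g, hfm, hfi, hgm, hgi, rfl⟩ := decomp X θ hθX hu
        by_cases hkr : m + 1 ≤ r
        · rw [hΓ1 m hkr f g hfm hfi hgm hgi]
          have hg' : g ∈ ⋀[ℝ]^(2 * r - (2 * r - m) + 1) (Module.Dual ℝ V) := by
            rw [show 2 * r - (2 * r - m) + 1 = m + 1 from by omega]; exact hgm
          have hf' : f ∈ ⋀[ℝ]^(2 * r - (2 * r - m)) (Module.Dual ℝ V) := by
            rw [show 2 * r - (2 * r - m) = m from by omega]; exact hfm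
          have key := hΓ2 (2 * r - m) (by omega) (by omega) g f hg' hgi hf' hfi
          rw [show 2 * r - m - 1 - r = r - (m + 1) from by omega,
            show 2 * r - m - r = r - m from by omega] at key
          exact key
        · by_cases hk3 : m + 1 ≤ 2 * r
          · obtain ⟨f₀, hf₀m, hf₀i, hf₀e⟩ := (hL (2 * r - m) (by omega)).2 f
              (by rw [show 2 * r - (2 * r - m) = m from by omega]; exact hfm) hfi
            obtain ⟨g₀, hg₀m, hg₀i, hg₀e⟩ := (hL (2 * r - (m + 1)) (by omega)).2 g
              (by rw [show 2 * r - (2 * r - (m + 1)) = m + 1 from by omega]; exact hgm) hgi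
            have hf₀m' : f₀ ∈ ⋀[ℝ]^(2 * r - (m + 1) + 1) (Module.Dual ℝ V) := by
              rw [show 2 * r - (m + 1) + 1 = 2 * r - m from by omega]; exact hf₀m
            have key := hΓ2 (m + 1) (by omega) hk3 f₀ g₀ hf₀m' hf₀i hg₀m hg₀i
            rw [show m + 1 - 1 - r = r - (2 * r - m) from by omega,
              show m + 1 - r = r - (2 * r - (m + 1)) from by omega, hf₀e, hg₀e] at key
            rw [key]
            have key2 := hΓ1 (2 * r - (m + 1)) (by omega) g₀ f₀ hg₀m hg₀i hf₀m' hf₀i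
            rw [show r - (2 * r - (m + 1) + 1) = r - (2 * r - m) from by omega,
              hf₀e, hg₀e] at key2
            exact key2
          · have hm : m = 2 * r := by omega
            subst hm
            have htg : ExteriorAlgebra.ι ℝ θ * g = 0 := by
              have h5 : ExteriorAlgebra.ι ℝ θ * g ∈
                  LinearMap.range (ExteriorAlgebra.ι ℝ (M := Module.Dual ℝ V)) *
                    ⋀[ℝ]^(2 * r + 1) (Module.Dual ℝ V) :=
                Submodule.mul_mem_mul (LinearMap.mem_range_self _ θ) hgm
              rw [← pow_succ'] at h5
              have h7 : ExteriorAlgebra.ι ℝ θ * g ∈ ⋀[ℝ]^(2 * r + 1 + 1) (Module.Dual ℝ V) := h5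
              rw [hbot (2 * r + 1 + 1) (by omega)] at h7
              simpa using h7
            have hg0 : g = 0 := by
              have h6 := interiorProd_ι_mul X θ g
              rw [htg, map_zero, hθX, one_smul, hgi, mul_zero, sub_zero] at h6
              exact h6.symm
            obtain ⟨f₀, hf₀m, hf₀i, hf₀e⟩ := (hL 0 (by omega)).2 f
              (by simpa using hfm) hfi
            rw [Nat.sub_zero] at hf₀e
            rw [hg0, add_zero, ← hf₀e, hΓ3 f₀ hf₀m, hΓ0 f₀ hf₀m]
  apply LinearMap.ext
  intro x
  have hx : x ∈ ⨆ k : ℕ, ⋀[ℝ]^k (Module.Dual ℝ V) := by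
    rw [(DirectSum.Decomposition.isInternal
      (fun k : ℕ => ⋀[ℝ]^k (Module.Dual ℝ V))).submodule_iSup_eq_top]
    trivial
  show Γ (Γ x) = x
  refine Submodule.iSup_induction (motive := fun y => Γ (Γ y) = y) _ hx main ?_ ?_
  · simp
  · intro a b ha hb
    rw [map_add, map_add, ha, hb]
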